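/- Let D be an m×n matrix over 𝔽₂, let V be an invertible n×n matrix over 𝔽₂, and suppose R = D·V is reduced. Then the rank of D equals the number of nonzero columns of R. -/

import Mathlib

set_option maxHeartbeats 800000


open Matrix

/-- The `low` of column `j` of `R`: the largest row index `i` with `R i j ≠ 0`,
or `⊥` if the column is zero. -/
def low {m n : ℕ} (R : Matrix (Fin m) (Fin n) (ZMod 2)) (j : Fin n) : WithBot (Fin m) :=
  (Finset.univ.filter fun i => R i j ≠ 0).max

/-- `R` is reduced if no two distinct nonzero columns have equal lows. -/
def Reduced {m n : ℕ} (R : Matrix (Fin m) (Fin n) (ZMod 2)) : Prop :=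
  ∀ j₁ j₂ : Fin n, low R j₁ ≠ ⊥ → low R j₁ = low R j₂ → j₁ = j₂

/-- A square matrix is upper triangular if `V i j = 0` whenever `i > j`. -/
def UpperTri {k : ℕ} (V : Matrix (Fin k) (Fin k) (ZMod 2)) : Prop :=
  ∀ i j : Fin k, j < i → V i j = 0

lemma low_eq_bot_iff {m n : ℕ} (R : Matrix (Fin m) (Fin n) (ZMod 2)) (j : Fin n) :
    low R j = ⊥ ↔ ∀ i, R i j = 0 := by
  simp [low, Finset.max_eq_bot, Finset.filter_eq_empty_iff]

lemma le_low {m n : ℕ} (R : Matrix (Fin m) (Fin n) (ZMod 2)) {i : Fin m} {j : Fin n}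
    (h : R i j ≠ 0) : (i : WithBot (Fin m)) ≤ low R j :=
  Finset.le_max (by simp [h])

lemma low_mem {m n : ℕ} (R : Matrix (Fin m) (Fin n) (ZMod 2)) {i : Fin m} {j : Fin n}
    (h : low R j = (i : WithBot (Fin m))) : R i j ≠ 0 := by
  have := Finset.mem_of_max h
  simpa using this

lemma reduced_indep {m n : ℕ} (R : Matrix (Fin m) (Fin n) (ZMod 2)) (hR : Reduced R) :
    LinearIndependent (ZMod 2)
      (fun j : {j : Fin n // low R j ≠ ⊥} => Rᵀ j.1) := by
  rw [Fintype.linearIndependent_iff]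
  intro g hg
  by_contra hc
  push_neg at hc
  set T := Finset.univ.filter fun j : {j : Fin n // low R j ≠ ⊥} => g j ≠ 0 with hT
  have hTne : T.Nonempty := by
    obtain ⟨j, hj⟩ := hc
    exact ⟨j, by simp [hT, hj]⟩
  obtain ⟨j₀, hj₀T, hj₀max⟩ := T.exists_max_image (fun j => low R j.1) hTne
  obtain ⟨i₀, hi₀⟩ := WithBot.ne_bot_iff_exists.mp j₀.2
  have hsum := congrFun hg i₀
  have hsingle : ∑ j, g j • Rᵀ j.1 i₀ = g j₀ * R i₀ j₀.1 := by
    rw [Finset.sum_eq_single j₀]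
    · simp [Matrix.transpose_apply]
    · intro j _ hjne
      rcases eq_or_ne (g j) 0 with h0 | h0
      · simp [h0]
      · have hjT : j ∈ T := by simp [hT, h0]
        have hle : low R j.1 ≤ low R j₀.1 := hj₀max j hjT
        have hR0 : R i₀ j.1 = 0 := by
          by_contra hne
          have h1 : (i₀ : WithBot (Fin m)) ≤ low R j.1 := le_low R hne
          have heq : low R j.1 = low R j₀.1 := le_antisymm hle (hi₀ ▸ h1)
          exact hjne (Subtype.ext (hR j.1 j₀.1 j.2 heq))
        simp [Matrix.transpose_apply, hR0]
    · intro h; exact absurd (Finset.mem_univ j₀) h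
  have hji : g j₀ ≠ 0 := by
    have := hj₀T; simp [hT] at this; exact this
  have hRne : R i₀ j₀.1 ≠ 0 := low_mem R hi₀.symm
  have : ∑ j, g j • Rᵀ j.1 i₀ = 0 := by
    simpa using hsum
  rw [hsingle] at this
  exact hRne ((mul_eq_zero.mp this).resolve_left hji)

/-- the rank of `D` equals the number of nonzero columns of a reduced
form of `D`. -/
theorem stmt_10 {m n : ℕ} (D : Matrix (Fin m) (Fin n) (ZMod 2))
    (V : Matrix (Fin n) (Fin n) (ZMod 2)) (hV : IsUnit V)
    (hR : Reduced (D * V)) :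
    D.rank = (Finset.univ.filter fun j : Fin n => low (D * V) j ≠ ⊥).card := by
  set R := D * V with hRdef
  have hdet : IsUnit V.det := (Matrix.isUnit_iff_isUnit_det V).mp hV
  have hrank : D.rank = R.rank := (Matrix.rank_mul_eq_left_of_isUnit_det V D hdet).symm
  rw [hrank, Matrix.rank_eq_finrank_span_cols]
  set s := Finset.univ.filter fun j : Fin n => low R j ≠ ⊥ with hs
  have hspan : Submodule.span (ZMod 2) (Set.range Rᵀ) =
      Submodule.span (ZMod 2) (Set.range fun j : {j : Fin n // low R j ≠ ⊥} => Rᵀ j.1) := by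
    apply le_antisymm
    · rw [Submodule.span_le]
      rintro _ ⟨j, rfl⟩
      rcases eq_or_ne (low R j) ⊥ with h | h
      · have hz : Rᵀ j = 0 := by
          funext i
          exact (low_eq_bot_iff R j).mp h i
        rw [hz]
        exact Submodule.zero_mem _
      · exact Submodule.subset_span ⟨⟨j, h⟩, rfl⟩
    · apply Submodule.span_mono
      rintro _ ⟨j, rfl⟩
      exact ⟨j.1, rfl⟩
  rw [show R.col = Rᵀ from rfl, hspan, finrank_span_eq_card (reduced_indep R hR)]
  simp [hs, Fintype.card_subtype]
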